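/- Let A ∈ ℝ^{m×n} and ε ≥ 0, and suppose that either A has full row rank or ε > 0. Let x ∈ ℝⁿ satisfy ‖Ax‖ > ε. Then there exists a unique positive real number τ_x satisfying τ_x ‖(AAᵀ + ε τ_x I)⁻¹ Ax‖ = 1, and moreover this τ_x satisfies 0 < τ_x ≤ σ_max(A)² / (‖Ax‖ − ε). -/

import Mathlib

set_option maxHeartbeats 4000000

/-- Euclidean norm of a vector in ℝ^k. -/
noncomputable def vecNorm {k : ℕ} (v : Fin k → ℝ) : ℝ := Real.sqrt (∑ i, v i ^ 2)

/-- Largest singular value of `A`, i.e. the operator 2-norm of `A`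
(supremum of `‖A x‖` over the Euclidean unit ball). -/
noncomputable def sigmaMax {m n : ℕ} (A : Matrix (Fin m) (Fin n) ℝ) : ℝ :=
  ⨆ x : {v : Fin n → ℝ // vecNorm v ≤ 1}, vecNorm (A.mulVec x.1)

namespace Stmt1Aux

lemma vecNorm_nonneg {k : ℕ} (v : Fin k → ℝ) : 0 ≤ vecNorm v := Real.sqrt_nonneg _

lemma vecNorm_sq {k : ℕ} (v : Fin k → ℝ) : vecNorm v ^ 2 = ∑ i, v i ^ 2 :=
  Real.sq_sqrt (Finset.sum_nonneg fun _ _ => sq_nonneg _)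

lemma vecNorm_eq_norm {k : ℕ} (v : EuclideanSpace ℝ (Fin k)) :
    vecNorm (⇑v) = ‖v‖ := by
  rw [EuclideanSpace.norm_eq, vecNorm]
  congr 1
  refine Finset.sum_congr rfl fun i _ => ?_
  rw [Real.norm_eq_abs, sq_abs]

lemma vecNorm_smul {k : ℕ} (a : ℝ) (v : Fin k → ℝ) :
    vecNorm (a • v) = |a| * vecNorm v := by
  rw [vecNorm, vecNorm]
  have : ∑ i, (a • v) i ^ 2 = a ^ 2 * ∑ i, v i ^ 2 := by
    rw [Finset.mul_sum]; refine Finset.sum_congr rfl fun i _ => ?_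
    simp [mul_pow]
  rw [this, Real.sqrt_mul (sq_nonneg a), Real.sqrt_sq_eq_abs]

lemma repr_combo {k : ℕ} (u : OrthonormalBasis (Fin k) ℝ (EuclideanSpace ℝ (Fin k)))
    (a : Fin k → ℝ) (i : Fin k) : u.repr (∑ j, a j • u j) i = a i := by
  rw [OrthonormalBasis.repr_apply_apply, inner_sum]
  simp only [real_inner_smul_right]
  rw [Finset.sum_eq_single i]
  · rw [real_inner_self_eq_norm_sq, u.orthonormal.1 i]; simp
  · intro j _ hj
    rw [u.orthonormal.2 (Ne.symm hj)]; ring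
  · simp

lemma vecNorm_combo {k : ℕ} (u : OrthonormalBasis (Fin k) ℝ (EuclideanSpace ℝ (Fin k)))
    (a : Fin k → ℝ) :
    vecNorm (∑ j, a j • ⇑(u j)) = Real.sqrt (∑ i, a i ^ 2) := by
  have h1 : (∑ j, a j • ⇑(u j)) = ⇑(∑ j, a j • u j) := by simp [WithLp.ofLp_sum]
  rw [h1, vecNorm_eq_norm, ← u.repr.norm_map, EuclideanSpace.norm_eq]
  congr 1
  refine Finset.sum_congr rfl fun i _ => ?_
  rw [repr_combo, Real.norm_eq_abs, sq_abs]

end Stmt1Aux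

theorem stmt1 {m n : ℕ} (A : Matrix (Fin m) (Fin n) ℝ) (ε : ℝ) (hε : 0 ≤ ε)
    (hrank : LinearIndependent ℝ (fun i : Fin m => A i) ∨ 0 < ε)
    (x : Fin n → ℝ) (hx : ε < vecNorm (A.mulVec x)) :
    (∃! τ : ℝ, 0 < τ ∧
      τ * vecNorm ((A * A.transpose +
        (ε * τ) • (1 : Matrix (Fin m) (Fin m) ℝ))⁻¹.mulVec (A.mulVec x)) = 1) ∧
    ∀ τ : ℝ, 0 < τ →
      τ * vecNorm ((A * A.transpose +
        (ε * τ) • (1 : Matrix (Fin m) (Fin m) ℝ))⁻¹.mulVec (A.mulVec x)) = 1 →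
      τ ≤ sigmaMax A ^ 2 / (vecNorm (A.mulVec x) - ε) := by
  open Matrix Stmt1Aux in
  · classical
    set b : Fin m → ℝ := A.mulVec x with hb
    set N : ℝ := vecNorm b with hNdef
    have hN0 : 0 < N := lt_of_le_of_lt hε hx
    -- quadratic form identity
    have hAq : ∀ y : Fin m → ℝ,
        y ⬝ᵥ ((A * A.transpose) *ᵥ y) = ∑ j, ((A.transpose *ᵥ y) j) ^ 2 := by
      intro y
      rw [← Matrix.mulVec_mulVec, Matrix.dotProduct_mulVec, ← Matrix.mulVec_transpose]
      simp [dotProduct, sq]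
    -- kernel triviality from full rank
    have hker : LinearIndependent ℝ (fun i : Fin m => A i) →
        ∀ y : Fin m → ℝ, A.transpose *ᵥ y = 0 → y = 0 := by
      intro hli y hy
      have h := Fintype.linearIndependent_iff.mp hli y ?_
      · exact funext h
      · funext j
        have := congrFun hy j
        simpa [Matrix.mulVec_transpose, Matrix.vecMul, dotProduct,
          Finset.sum_apply, mul_comm] using this
    -- spectral data
    have hB : (A * A.transpose).IsHermitian := by
      have h := (Matrix.posSemidef_self_mul_conjTranspose A).isHermitian
      rwa [Matrix.conjTranspose_eq_transpose_of_trivial] at h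
    set u := hB.eigenvectorBasis with hu
    set l := hB.eigenvalues with hl
    have hBu : ∀ i, (A * A.transpose) *ᵥ ⇑(u i) = l i • ⇑(u i) := fun i =>
      hB.mulVec_eigenvectorBasis i
    have hu_norm : ∀ i, vecNorm ⇑(u i) = 1 := fun i => by
      rw [vecNorm_eq_norm, u.orthonormal.1 i]
    have hu_sq : ∀ i, ∑ j, (u i j) ^ 2 = 1 := fun i => by
      have := vecNorm_sq (⇑(u i))
      rw [hu_norm i] at this; simpa using this.symm
    set w : Fin m → Fin n → ℝ := fun i => A.transpose *ᵥ ⇑(u i) with hw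
    have hwl : ∀ i, ∑ j, (w i j) ^ 2 = l i := by
      intro i
      have h1 := hAq (⇑(u i))
      rw [hBu i] at h1
      have h2 : (⇑(u i)) ⬝ᵥ (l i • ⇑(u i)) = l i := by
        rw [dotProduct_smul]
        have : (⇑(u i)) ⬝ᵥ (⇑(u i)) = 1 := by
          rw [dotProduct]
          simpa [sq] using hu_sq i
        rw [smul_eq_mul, this, mul_one]
      rw [h2] at h1; exact h1.symm
    have hl0 : ∀ i, 0 ≤ l i := fun i =>
      (hwl i) ▸ Finset.sum_nonneg fun _ _ => sq_nonneg _
    -- coefficients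
    set c : Fin m → ℝ := fun i => (⇑(u i)) ⬝ᵥ b with hc
    have hbE : (WithLp.equiv 2 (Fin m → ℝ)).symm b = (WithLp.toLp 2 (fun j => b j) : EuclideanSpace ℝ (Fin m)) := rfl
    set bE : EuclideanSpace ℝ (Fin m) := (WithLp.equiv 2 (Fin m → ℝ)).symm b with hbEdef
    have hrepr : ∀ i, u.repr bE i = c i := by
      intro i
      rw [OrthonormalBasis.repr_apply_apply]
      rw [PiLp.inner_apply]
      simp only [RCLike.inner_apply, starRingEnd_apply, star_trivial]
      rw [hc]; simp only [dotProduct]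
      exact Finset.sum_congr rfl fun _ _ => mul_comm _ _
    have hbsum : (∑ i, c i • ⇑(u i)) = b := by
      have h := u.sum_repr bE
      have h2 : (⇑(∑ i, u.repr bE i • u i) : Fin m → ℝ) = ⇑bE := by rw [h]
      have h3 : (∑ i, u.repr bE i • ⇑(u i)) = b := by
        have h4 : (∑ i, u.repr bE i • ⇑(u i)) = ⇑bE := by simpa [WithLp.ofLp_sum] using h2
        exact h4
      rw [← h3]
      refine Finset.sum_congr rfl fun i _ => ?_
      rw [hrepr]
    have hparseval : ∑ i, c i ^ 2 = N ^ 2 := by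
      have h1 : vecNorm b = Real.sqrt (∑ i, c i ^ 2) := by
        conv_lhs => rw [← hbsum]
        rw [vecNorm_combo u c]
      rw [← hNdef] at h1
      rw [← Real.sq_sqrt (Finset.sum_nonneg fun (_ : Fin m) _ => sq_nonneg (c _)), ← h1]
    -- c_i = 0 when l_i = 0
    have hc0 : ∀ i, l i = 0 → c i = 0 := by
      intro i hli
      have hwi : w i = 0 := by
        have h := hwl i
        rw [hli] at h
        funext j
        have := (Finset.sum_eq_zero_iff_of_nonneg (fun _ _ => sq_nonneg _)).mp h j (by simp)
        exact pow_eq_zero_iff (by norm_num) |>.mp this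
      have : c i = (w i) ⬝ᵥ x := by
        rw [hc]
        show (⇑(u i)) ⬝ᵥ (A *ᵥ x) = _
        rw [Matrix.dotProduct_mulVec, ← Matrix.mulVec_transpose]
      rw [this, hwi, zero_dotProduct]
    have hcl : ∀ i, c i ≠ 0 → 0 < l i := fun i hci =>
      lt_of_le_of_ne (hl0 i) fun h => hci (hc0 i h.symm)
    -- positivity of the shifted eigenvalues
    have hpos : ∀ (i : Fin m) (t : ℝ), 0 < t → 0 < l i + ε * t := by
      intro i t ht
      rcases hrank with hli | hε'
      · have : l i ≠ 0 := by
          intro h0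
          have hwi : w i = 0 := by
            have h := hwl i
            rw [h0] at h
            funext j
            have := (Finset.sum_eq_zero_iff_of_nonneg (fun _ _ => sq_nonneg _)).mp h j (by simp)
            exact pow_eq_zero_iff (by norm_num) |>.mp this
          have hz := hker hli (⇑(u i)) hwi
          have h1 := hu_sq i
          rw [Finset.sum_eq_zero (fun j _ => by rw [show u i j = 0 from congrFun hz j]; norm_num)]
            at h1
          exact one_ne_zero h1.symm
        have hip : 0 < l i := lt_of_le_of_ne (hl0 i) (Ne.symm this)
        have : 0 ≤ ε * t := mul_nonneg hε ht.le
        linarith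
      · have : 0 < ε * t := mul_pos hε' ht
        have := hl0 i
        linarith
    -- matrix family and its inverse action
    set Mt : ℝ → Matrix (Fin m) (Fin m) ℝ :=
      fun t => A * A.transpose + (ε * t) • (1 : Matrix (Fin m) (Fin m) ℝ) with hMt
    have hMu : ∀ (t : ℝ) i, Mt t *ᵥ ⇑(u i) = (l i + ε * t) • ⇑(u i) := by
      intro t i
      rw [hMt]
      rw [Matrix.add_mulVec, hBu i, Matrix.smul_mulVec, Matrix.one_mulVec, add_smul]
    have hMpd : ∀ t : ℝ, 0 < t → (Mt t).PosDef := by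
      intro t ht
      rw [Matrix.posDef_iff_dotProduct_mulVec]
      constructor
      · have h1 : ((ε * t) • (1 : Matrix (Fin m) (Fin m) ℝ)).IsHermitian := by
          unfold Matrix.IsHermitian
          rw [Matrix.conjTranspose_smul]
          simp [Matrix.conjTranspose_one]
        exact hB.add h1
      · intro y hy
        have hsy : star y = y := star_trivial y
        rw [hsy, hMt]
        rw [Matrix.add_mulVec, dotProduct_add, hAq y, Matrix.smul_mulVec,
          Matrix.one_mulVec]
        have hyy : 0 < y ⬝ᵥ y := by
          have hj : ∃ j, y j ≠ 0 := by
            by_contra h; push_neg at h; exact hy (funext fun j => h j)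
          rcases hj with ⟨j, hj⟩
          rw [dotProduct]
          exact Finset.sum_pos' (fun j _ => mul_self_nonneg _)
            ⟨j, Finset.mem_univ _, mul_self_pos.mpr hj⟩
        have h2 : y ⬝ᵥ ((ε * t) • y) = (ε * t) * (y ⬝ᵥ y) := by
          rw [dotProduct_smul, smul_eq_mul]
        rw [h2]
        have hq1 : 0 ≤ ∑ j, ((A.transpose *ᵥ y) j) ^ 2 :=
          Finset.sum_nonneg fun _ _ => sq_nonneg _
        rcases hrank with hli | hε'
        · have hne : A.transpose *ᵥ y ≠ 0 := fun h => hy (hker hli y h)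
          have hj : ∃ j, (A.transpose *ᵥ y) j ≠ 0 := by
            by_contra h; push_neg at h; exact hne (funext fun j => h j)
          rcases hj with ⟨j, hj⟩
          have hq2 : 0 < ∑ j, ((A.transpose *ᵥ y) j) ^ 2 :=
            Finset.sum_pos' (fun _ _ => sq_nonneg _)
              ⟨j, Finset.mem_univ _, lt_of_le_of_ne (sq_nonneg _) (Ne.symm (pow_ne_zero 2 hj))⟩
          nlinarith [mul_nonneg (mul_nonneg hε ht.le) hyy.le]
        · nlinarith [mul_pos (mul_pos hε' ht) hyy]

    -- explicit solution of (Mt t) y = b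
    set yv : ℝ → Fin m → ℝ := fun t => ∑ i, (c i / (l i + ε * t)) • ⇑(u i) with hyv
    have hMy : ∀ t : ℝ, 0 < t → Mt t *ᵥ yv t = b := by
      intro t ht
      have h1 : Mt t *ᵥ yv t = ∑ i, (c i / (l i + ε * t)) • (Mt t *ᵥ ⇑(u i)) := by
        rw [hyv, ← Matrix.mulVecLin_apply, map_sum]
        refine Finset.sum_congr rfl fun i _ => ?_
        rw [LinearMap.map_smul, Matrix.mulVecLin_apply]
      rw [h1, ← hbsum]
      refine Finset.sum_congr rfl fun i _ => ?_
      rw [hMu t i, smul_smul, div_mul_cancel₀ _ (hpos i t ht).ne']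
    have hMinv : ∀ t : ℝ, 0 < t → (Mt t)⁻¹ *ᵥ b = yv t := by
      intro t ht
      conv_lhs => rw [← hMy t ht]
      rw [Matrix.mulVec_mulVec,
        Matrix.nonsing_inv_mul _ ((Matrix.isUnit_iff_isUnit_det _).mp (hMpd t ht).isUnit),
        Matrix.one_mulVec]
    -- the scalar function F
    set F : ℝ → ℝ := fun t => ∑ i, c i ^ 2 * t ^ 2 / (l i + ε * t) ^ 2 with hF
    have hFval : ∀ t : ℝ, 0 < t → t * vecNorm ((Mt t)⁻¹ *ᵥ b) = Real.sqrt (F t) := by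
      intro t ht
      rw [hMinv t ht, hyv, vecNorm_combo u _]
      have hFt : F t = t ^ 2 * ∑ i, (c i / (l i + ε * t)) ^ 2 := by
        rw [hF, Finset.mul_sum]
        refine Finset.sum_congr rfl fun i _ => ?_
        rw [div_pow]; ring
      rw [hFt, Real.sqrt_mul (sq_nonneg t), Real.sqrt_sq ht.le]
    have hiff : ∀ t : ℝ, 0 < t → ((t * vecNorm ((Mt t)⁻¹ *ᵥ b) = 1) ↔ F t = 1) := by
      intro t ht
      rw [hFval t ht, Real.sqrt_eq_one]
    -- an index with nonzero coefficient
    have hex : ∃ i, c i ≠ 0 := by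
      by_contra h; push_neg at h
      have h0 : ∑ i, c i ^ 2 = 0 := Finset.sum_eq_zero fun i _ => by rw [h i]; ring
      rw [hparseval] at h0; nlinarith
    obtain ⟨i₀, hi₀⟩ := hex
    -- strict monotonicity of F on (0, ∞)
    have hFmono : StrictMonoOn F (Set.Ioi 0) := by
      intro s hs t ht hst
      simp only [Set.mem_Ioi] at hs ht
      refine Finset.sum_lt_sum (fun i _ => ?_) ⟨i₀, Finset.mem_univ _, ?_⟩
      · have hds := hpos i s hs
        have hdt := hpos i t ht
        rw [div_le_div_iff₀ (by positivity) (by positivity)]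
        have hab : s * (l i + ε * t) ≤ t * (l i + ε * s) := by
          nlinarith [mul_le_mul_of_nonneg_left hst.le (hl0 i)]
        have ha : 0 ≤ s * (l i + ε * t) := by positivity
        have hsq : (s * (l i + ε * t)) ^ 2 ≤ (t * (l i + ε * s)) ^ 2 :=
          pow_le_pow_left₀ ha hab 2
        nlinarith [mul_le_mul_of_nonneg_left hsq (sq_nonneg (c i))]
      · have hds := hpos i₀ s hs
        have hdt := hpos i₀ t ht
        have hlp := hcl i₀ hi₀
        rw [div_lt_div_iff₀ (by positivity) (by positivity)]
        have hab : s * (l i₀ + ε * t) < t * (l i₀ + ε * s) := by nlinarith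
        have ha : 0 ≤ s * (l i₀ + ε * t) := by positivity
        have hsq : (s * (l i₀ + ε * t)) ^ 2 < (t * (l i₀ + ε * s)) ^ 2 :=
          pow_lt_pow_left₀ hab ha (by norm_num)
        have hc2 : 0 < c i₀ ^ 2 := by positivity
        nlinarith [mul_lt_mul_of_pos_left hsq hc2]
    -- bound on the sup defining sigmaMax
    have hbdd : BddAbove (Set.range fun v : {v : Fin n → ℝ // vecNorm v ≤ 1} =>
        vecNorm (A.mulVec v.1)) := by
      refine ⟨Real.sqrt (∑ i, ∑ j, A i j ^ 2), ?_⟩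
      rintro r ⟨⟨v, hv⟩, rfl⟩
      have hv2 : ∑ j, v j ^ 2 ≤ 1 := by
        have h1 := vecNorm_sq v
        nlinarith [vecNorm_nonneg v]
      show Real.sqrt (∑ i, (A.mulVec v) i ^ 2) ≤ Real.sqrt (∑ i, ∑ j, A i j ^ 2)
      apply Real.sqrt_le_sqrt
      have hrow : ∀ i, (A.mulVec v) i = ∑ j, A i j * v j := fun i => rfl
      calc ∑ i, (A.mulVec v) i ^ 2
          ≤ ∑ i, (∑ j, A i j ^ 2) * (∑ j, v j ^ 2) := by
            refine Finset.sum_le_sum fun i _ => ?_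
            rw [hrow i]
            exact Finset.sum_mul_sq_le_sq_mul_sq _ _ _
        _ ≤ ∑ i, ∑ j, A i j ^ 2 := by
            refine Finset.sum_le_sum fun i _ => ?_
            have h0 : 0 ≤ ∑ j, A i j ^ 2 := Finset.sum_nonneg fun _ _ => sq_nonneg _
            nlinarith
    have hσnn : 0 ≤ sigmaMax A := by
      have h0 : vecNorm (A.mulVec (0 : Fin n → ℝ)) ≤ sigmaMax A :=
        le_ciSup hbdd (⟨0, by simp [vecNorm]⟩ : {v : Fin n → ℝ // vecNorm v ≤ 1})
      exact le_trans (vecNorm_nonneg _) h0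
    set σ2 : ℝ := sigmaMax A ^ 2 with hσ2
    have hσ2nn : 0 ≤ σ2 := sq_nonneg _
    -- every eigenvalue is at most σ2
    have hlσ : ∀ i, l i ≤ σ2 := by
      intro i
      rcases eq_or_lt_of_le (hl0 i) with h0 | hlpos
      · rw [← h0]; exact hσ2nn
      · have hsl : 0 < Real.sqrt (l i) := Real.sqrt_pos.mpr hlpos
        set v : Fin n → ℝ := (Real.sqrt (l i))⁻¹ • w i with hv
        have hwn : vecNorm (w i) = Real.sqrt (l i) := by rw [vecNorm, hwl i]
        have hv1 : vecNorm v ≤ 1 := by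
          rw [hv, vecNorm_smul, hwn, abs_of_pos (inv_pos.mpr hsl), inv_mul_cancel₀ hsl.ne']
        have hAw : A.mulVec (w i) = l i • ⇑(u i) := by
          rw [hw]
          show A *ᵥ (A.transpose *ᵥ ⇑(u i)) = _
          rw [Matrix.mulVec_mulVec]
          exact hBu i
        have hAv : A.mulVec v = Real.sqrt (l i) • ⇑(u i) := by
          rw [hv, Matrix.mulVec_smul, hAw, smul_smul]
          congr 1
          rw [inv_mul_eq_div, div_eq_iff hsl.ne']
          exact (Real.mul_self_sqrt hlpos.le).symm
        have hAvn : vecNorm (A.mulVec v) = Real.sqrt (l i) := by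
          rw [hAv, vecNorm_smul, abs_of_pos hsl, hu_norm i, mul_one]
        have hle : Real.sqrt (l i) ≤ sigmaMax A := by
          rw [← hAvn]
          exact le_ciSup hbdd (⟨v, hv1⟩ : {v : Fin n → ℝ // vecNorm v ≤ 1})
        calc l i = Real.sqrt (l i) ^ 2 := (Real.sq_sqrt hlpos.le).symm
          _ ≤ σ2 := pow_le_pow_left₀ hsl.le hle 2
    -- lower bound on F
    have hsum_lb : ∀ t : ℝ, 0 < t → N ^ 2 * t ^ 2 / (σ2 + ε * t) ^ 2 ≤ F t := by
      intro t ht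
      rw [hF, ← hparseval, Finset.sum_mul, Finset.sum_div]
      refine Finset.sum_le_sum fun i _ => ?_
      have hd := hpos i t ht
      have hS : 0 < σ2 + ε * t := by nlinarith [hlσ i]
      have h1 : l i + ε * t ≤ σ2 + ε * t := by linarith [hlσ i]
      have hsq : (l i + ε * t) ^ 2 ≤ (σ2 + ε * t) ^ 2 := pow_le_pow_left₀ hd.le h1 2
      rw [div_le_div_iff₀ (by positivity) (by positivity)]
      nlinarith [mul_le_mul_of_nonneg_left hsq (by positivity : (0:ℝ) ≤ c i ^ 2 * t ^ 2)]
    have hSpos : ∀ t : ℝ, 0 < t → 0 < σ2 + ε * t := by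
      intro t ht
      nlinarith [hpos i₀ t ht, hlσ i₀]
    -- the upper endpoint
    have hNε : 0 < N - ε := by linarith
    set τ1 : ℝ := (σ2 + 1) / (N - ε) with hτ1
    have hτ1pos : 0 < τ1 := by positivity
    have hFτ1 : 1 < F τ1 := by
      have hS := hSpos τ1 hτ1pos
      refine lt_of_lt_of_le ?_ (hsum_lb τ1 hτ1pos)
      rw [lt_div_iff₀ (by positivity), one_mul]
      have hkey : σ2 + ε * τ1 < N * τ1 := by
        have h1 : τ1 * (N - ε) = σ2 + 1 := by rw [hτ1]; field_simp
        nlinarith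
      nlinarith [mul_pos hN0 hτ1pos]
    -- the lower endpoint
    set D : ℝ := ∑ i, if l i = 0 then 0 else c i ^ 2 / l i ^ 2 with hD
    have hD0 : 0 ≤ D := Finset.sum_nonneg fun i _ => by split <;> positivity
    set τ0 : ℝ := min (τ1 / 2) (1 / (D + 1)) with hτ0
    have hτ0pos : 0 < τ0 := lt_min (by positivity) (by positivity)
    have hτ01 : τ0 < τ1 := lt_of_le_of_lt (min_le_left _ _) (by linarith)
    have hFτ0 : F τ0 < 1 := by
      have hFle : F τ0 ≤ τ0 ^ 2 * D := by
        rw [hF, hD, Finset.mul_sum]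
        refine Finset.sum_le_sum fun i _ => ?_
        by_cases hli : l i = 0
        · simp [hli, hc0 i hli]
        · rw [if_neg hli]
          have hlp : 0 < l i := lt_of_le_of_ne (hl0 i) (Ne.symm hli)
          have hd := hpos i τ0 hτ0pos
          have h2 : τ0 ^ 2 * (c i ^ 2 / l i ^ 2) = c i ^ 2 * τ0 ^ 2 / l i ^ 2 := by ring
          rw [h2, div_le_div_iff₀ (pow_pos hd 2) (pow_pos hlp 2)]
          have h1 : l i ≤ l i + ε * τ0 := by nlinarith [mul_nonneg hε hτ0pos.le]
          have hsq : l i ^ 2 ≤ (l i + ε * τ0) ^ 2 := pow_le_pow_left₀ hlp.le h1 2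
          nlinarith [mul_le_mul_of_nonneg_left hsq (mul_nonneg (sq_nonneg _) (sq_nonneg _) : (0:ℝ) ≤ c i ^ 2 * τ0 ^ 2)]
      have h1 : τ0 ≤ 1 / (D + 1) := min_le_right _ _
      have h2 : τ0 * (D + 1) ≤ 1 := by
        rw [← le_div_iff₀ (by linarith : (0:ℝ) < D + 1)]; exact h1
      nlinarith [mul_le_mul_of_nonneg_left h2 hτ0pos.le, mul_nonneg hτ0pos.le hD0]
    -- continuity and IVT
    have hFcont : ContinuousOn F (Set.Icc τ0 τ1) := by
      rw [hF]
      apply continuousOn_finset_sum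
      intro i _
      by_cases hci : c i = 0
      · simpa [hci] using (continuousOn_const (c := (0:ℝ)))
      · apply ContinuousOn.div
        · fun_prop
        · fun_prop
        · intro t htI
          have ht : 0 < t := lt_of_lt_of_le hτ0pos htI.1
          exact pow_ne_zero 2 (hpos i t ht).ne'
    obtain ⟨τ, hτI, hFτ⟩ := intermediate_value_Icc hτ01.le hFcont ⟨hFτ0.le, hFτ1.le⟩
    have hτpos : 0 < τ := lt_of_lt_of_le hτ0pos hτI.1
    constructor
    · refine ⟨τ, ⟨hτpos, (hiff τ hτpos).mpr hFτ⟩, ?_⟩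
      rintro τ' ⟨hτ'pos, hcond⟩
      have h1 : F τ' = 1 := (hiff τ' hτ'pos).mp hcond
      exact hFmono.injOn (Set.mem_Ioi.mpr hτ'pos) (Set.mem_Ioi.mpr hτpos) (by rw [h1, hFτ])
    · intro τ' hτ'pos hcond
      have h1 : F τ' = 1 := (hiff τ' hτ'pos).mp hcond
      have hS := hSpos τ' hτ'pos
      have hlb := hsum_lb τ' hτ'pos
      rw [h1] at hlb
      have h2 : N ^ 2 * τ' ^ 2 ≤ (σ2 + ε * τ') ^ 2 := by
        rw [div_le_one (by positivity)] at hlb; exact hlb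
      have h3 : N * τ' ≤ σ2 + ε * τ' := by nlinarith [mul_pos hN0 hτ'pos]
      rw [le_div_iff₀ hNε]
      nlinarith
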